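/- For every complex number s with Re(s) > 2, the zeta function of Conway's big picture satisfies ζ_𝔓(s) = Σ_{x ∈ 𝔓} |det x|^{−s} = ζ(s)·ζ(s−1)/ζ(2s), where the sum ranges over the classes of primitive matrices, |det x| denotes the (well-defined) absolute value of the determinant of any representative of the class x, and ζ is the Riemann zeta function. Equivalently, Σ_{n ≥ 1} P(n)·n^{−s} = ζ(s)ζ(s−1)/ζ(2s), where P(n) is the number of classes in 𝔓 whose representatives have determinant of absolute value n. -/

import Mathlib

noncomputable section
open Matrix

/-- 2×2 integer matrices. -/
abbrev M2Z : Type := Matrix (Fin 2) (Fin 2) ℤ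

/-- The multiplicative monoid `M₂ⁿˢ(ℤ)` of 2×2 integer matrices with nonzero determinant. -/
def Mns : Submonoid M2Z where
  carrier := {a | a.det ≠ 0}
  one_mem' := by simp
  mul_mem' := by
    intro a b ha hb
    simp only [Set.mem_setOf_eq, Matrix.det_mul] at *
    exact mul_ne_zero ha hb

/-- The equivalence relation on `M₂ⁿˢ(ℤ)` given by left multiplication by `GL₂(ℤ)`. -/
def leftGL : Setoid Mns where
  r a b := ∃ u : M2Zˣ, (b : M2Z) = (u : M2Z) * (a : M2Z)
  iseqv := by
    constructor
    · intro a; exact ⟨1, by simp⟩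
    · rintro a b ⟨u, h⟩
      refine ⟨u⁻¹, ?_⟩
      rw [h, ← mul_assoc, Units.inv_mul, one_mul]
    · rintro a b c ⟨u, h⟩ ⟨v, h'⟩
      exact ⟨v * u, by rw [h', h, Units.val_mul, mul_assoc]⟩

/-- The quotient `X = GL₂(ℤ)\M₂ⁿˢ(ℤ)`. -/
abbrev X : Type := Quotient leftGL

/-- A 2×2 integer matrix is primitive if the gcd of its four entries is `1`,
i.e. every common divisor of the entries is a unit. -/
def IsPrimitive (a : M2Z) : Prop := ∀ d : ℤ, (∀ i j, d ∣ a i j) → IsUnit d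

private lemma dvd_entries_mul (m c : M2Z) (d : ℤ) (h : ∀ i j, d ∣ c i j) :
    ∀ i j, d ∣ (m * c) i j := by
  intro i j
  rw [Matrix.mul_apply]
  exact Finset.dvd_sum fun k _ => (h k j).mul_left (m i k)

/-- Primitivity only depends on the class in `X = GL₂(ℤ)\M₂ⁿˢ(ℤ)`. -/
def PrimClass : X → Prop :=
  Quotient.lift (fun a : Mns => _root_.IsPrimitive (a : M2Z))
    (by
      rintro a b ⟨u, hu⟩
      have key : ∀ (v : M2Zˣ) (x y : Mns), (y : M2Z) = (v : M2Z) * (x : M2Z) →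
          _root_.IsPrimitive (x : M2Z) → _root_.IsPrimitive (y : M2Z) := by
        intro v x y hy hx d hd
        refine hx d ?_
        have hx' : (x : M2Z) = ((v⁻¹ : M2Zˣ) : M2Z) * (y : M2Z) := by
          rw [hy, ← mul_assoc, Units.inv_mul, one_mul]
        intro i j
        rw [hx']
        exact dvd_entries_mul _ _ d hd i j
      have hu' : (a : M2Z) = ((u⁻¹ : M2Zˣ) : M2Z) * (b : M2Z) := by
        rw [hu, ← mul_assoc, Units.inv_mul, one_mul]
      exact propext ⟨key u a b hu, key u⁻¹ b a hu'⟩)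

/-- The absolute value of the determinant, well-defined on `X`. -/
def detAbs : X → ℕ :=
  Quotient.lift (fun a : Mns => (a : M2Z).det.natAbs)
    (by
      rintro a b ⟨u, hu⟩
      have h1 : IsUnit ((u : M2Z)).det := (Matrix.isUnit_iff_isUnit_det _).mp u.isUnit
      have h2 : ((u : M2Z)).det.natAbs = 1 := Int.isUnit_iff.mp h1 |>.elim
        (fun h => by rw [h]; rfl) (fun h => by rw [h]; rfl)
      have : (b : M2Z).det = ((u : M2Z)).det * (a : M2Z).det := by
        rw [hu, Matrix.det_mul]
      show ((a : M2Z)).det.natAbs = ((b : M2Z)).det.natAbs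
      rw [this, Int.natAbs_mul, h2, one_mul])

namespace BigPictureAux

abbrev Hd : Type := Σ d : ℕ+, Fin (d : ℕ)
abbrev H : Type := ℕ+ × Hd

/-- `(a, ⟨d, b⟩)` is primitive iff `gcd(a, b, d) = 1`. -/
def prim (h : H) : Prop :=
  Nat.gcd (h.1 : ℕ) (Nat.gcd (h.2.2 : ℕ) (h.2.1 : ℕ)) = 1

def mkM (h : H) : M2Z :=
  !![((h.1 : ℕ) : ℤ), ((h.2.2 : ℕ) : ℤ); 0, ((h.2.1 : ℕ) : ℤ)]

lemma mkM_det (h : H) : (mkM h).det = ((h.1 : ℕ) : ℤ) * ((h.2.1 : ℕ) : ℤ) := by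
  simp [mkM, Matrix.det_fin_two_of]

lemma mkM_mem (h : H) : mkM h ∈ Mns := by
  show (mkM h).det ≠ 0
  rw [mkM_det]
  have h1 : (0:ℤ) < ((h.1 : ℕ) : ℤ) := by exact_mod_cast h.1.pos
  have h2 : (0:ℤ) < ((h.2.1 : ℕ) : ℤ) := by exact_mod_cast h.2.1.pos
  exact (mul_pos h1 h2).ne'

def mkH (h : H) : Mns := ⟨mkM h, mkM_mem h⟩

def Φ (h : H) : X := Quotient.mk leftGL (mkH h)

lemma H_ext {h h' : H} (h1 : (h.1 : ℕ) = (h'.1 : ℕ)) (h2 : (h.2.1 : ℕ) = (h'.2.1 : ℕ))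
    (h3 : (h.2.2 : ℕ) = (h'.2.2 : ℕ)) : h = h' := by
  obtain ⟨a, d, b⟩ := h
  obtain ⟨a', d', b'⟩ := h'
  simp only at h1 h2 h3
  obtain rfl : a = a' := PNat.coe_injective h1
  obtain rfl : d = d' := PNat.coe_injective h2
  obtain rfl : b = b' := Fin.ext h3
  rfl

lemma phi_inj : Function.Injective Φ := by
  intro h h' e
  obtain ⟨u, hu⟩ := Quotient.exact e
  set U : M2Z := (u : M2Z) with hUdef
  have hdetU : IsUnit U.det := (Matrix.isUnit_iff_isUnit_det U).mp u.isUnit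
  have hu2 : mkM h' = !![U 0 0, U 0 1; U 1 0, U 1 1] * mkM h := by
    rw [← Matrix.eta_fin_two]; exact hu
  simp only [mkM, Matrix.mul_fin_two] at hu2
  have e00 := congrFun (congrFun hu2 0) 0
  have e01 := congrFun (congrFun hu2 0) 1
  have e10 := congrFun (congrFun hu2 1) 0
  have e11 := congrFun (congrFun hu2 1) 1
  simp only [Matrix.cons_val', Matrix.cons_val_zero, Matrix.cons_val_one, Matrix.head_cons,
    Matrix.head_fin_const, Matrix.empty_val', Matrix.cons_val_fin_one, Matrix.of_apply,
    mul_zero, add_zero, zero_mul, zero_add] at e00 e01 e10 e11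
  have ha : (0:ℤ) < ((h.1 : ℕ) : ℤ) := by exact_mod_cast h.1.pos
  have hd : (0:ℤ) < ((h.2.1 : ℕ) : ℤ) := by exact_mod_cast h.2.1.pos
  have ha' : (0:ℤ) < ((h'.1 : ℕ) : ℤ) := by exact_mod_cast h'.1.pos
  have hd' : (0:ℤ) < ((h'.2.1 : ℕ) : ℤ) := by exact_mod_cast h'.2.1.pos
  have hb : (0:ℤ) ≤ ((h.2.2 : ℕ) : ℤ) := by positivity
  have hb' : (0:ℤ) ≤ ((h'.2.2 : ℕ) : ℤ) := by positivity
  have hbd : ((h.2.2 : ℕ) : ℤ) < ((h.2.1 : ℕ) : ℤ) := by exact_mod_cast h.2.2.isLt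
  have hbd' : ((h'.2.2 : ℕ) : ℤ) < ((h'.2.1 : ℕ) : ℤ) := by exact_mod_cast h'.2.2.isLt
  -- bottom-left entry gives U 1 0 = 0
  have hU10 : U 1 0 = 0 := by
    rcases mul_eq_zero.mp e10.symm with h0 | h0
    · exact h0
    · exact absurd h0 ha.ne'
  rw [hU10] at e11
  simp only [zero_mul, zero_add] at e11
  have hdet2 : U.det = U 0 0 * U 1 1 := by
    rw [Matrix.det_fin_two, hU10, mul_zero, sub_zero]
  rw [hdet2] at hdetU
  have hu00 : U 0 0 = 1 := by
    rcases Int.isUnit_iff.mp (isUnit_of_mul_isUnit_left hdetU) with h0 | h0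
    · exact h0
    · rw [h0] at e00; nlinarith
  have hu11 : U 1 1 = 1 := by
    rcases Int.isUnit_iff.mp (isUnit_of_mul_isUnit_right hdetU) with h0 | h0
    · exact h0
    · rw [h0] at e11; nlinarith
  rw [hu00, one_mul] at e00 e01
  rw [hu11, one_mul] at e11
  have hU01 : U 0 1 = 0 := by
    rcases lt_trichotomy (U 0 1) 0 with h0 | h0 | h0
    · have h5 : U 0 1 * ((h.2.1 : ℕ) : ℤ) ≤ -1 * ((h.2.1 : ℕ) : ℤ) :=
        mul_le_mul_of_nonneg_right (by omega) hd.le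
      rw [e11] at hbd'
      linarith
    · exact h0
    · have h5 : 1 * ((h.2.1 : ℕ) : ℤ) ≤ U 0 1 * ((h.2.1 : ℕ) : ℤ) :=
        mul_le_mul_of_nonneg_right (by omega) hd.le
      rw [e11] at hbd'
      linarith
  rw [hU01, zero_mul, add_zero] at e01
  exact H_ext (by exact_mod_cast e00.symm) (by exact_mod_cast e11.symm)
    (by exact_mod_cast e01.symm)

private lemma fin2_ext {a b c d a' b' c' d' : ℤ} (h1 : a = a') (h2 : b = b')
    (h3 : c = c') (h4 : d = d') : (!![a, b; c, d] : M2Z) = !![a', b'; c', d'] := by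
  subst h1; subst h2; subst h3; subst h4; rfl

lemma row_reduce (M : M2Z) (hdet : M.det ≠ 0) :
    ∃ (U : M2Z) (a b d : ℤ), IsUnit U ∧ U * M = !![a, b; 0, d] ∧
      0 < a ∧ 0 < d ∧ 0 ≤ b ∧ b < d := by
  obtain ⟨p, q, r, t, hM⟩ : ∃ p q r t, M = !![p, q; r, t] :=
    ⟨M 0 0, M 0 1, M 1 0, M 1 1, Matrix.eta_fin_two M⟩
  subst hM
  rw [Matrix.det_fin_two_of] at hdet
  have hgdvdp : ((Int.gcd p r : ℕ) : ℤ) ∣ p := Int.gcd_dvd_left p r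
  have hgdvdr : ((Int.gcd p r : ℕ) : ℤ) ∣ r := Int.gcd_dvd_right p r
  have hgpos : (0:ℤ) < ((Int.gcd p r : ℕ) : ℤ) := by
    have hne : Int.gcd p r ≠ 0 := by
      intro h0
      obtain ⟨rfl, rfl⟩ := Int.gcd_eq_zero_iff.mp h0
      simp at hdet
    exact_mod_cast Nat.pos_of_ne_zero hne
  set g : ℤ := ((Int.gcd p r : ℕ) : ℤ) with hgdef
  obtain ⟨P, hP⟩ := hgdvdp
  obtain ⟨R, hR⟩ := hgdvdr
  set x := Int.gcdA p r with hx
  set y := Int.gcdB p r with hy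
  have hbez : p * x + r * y = g := (Int.gcd_eq_gcd_ab p r).symm
  have key1 : (!![x, y; -R, P] : M2Z) * !![p, q; r, t] = !![g, x*q+y*t; 0, -R*q+P*t] := by
    rw [Matrix.mul_fin_two]
    exact fin2_ext (by linear_combination hbez) rfl (by rw [hP, hR]; ring) rfl
  have hdetU1 : (!![x, y; -R, P] : M2Z).det = 1 := by
    have hgg : g * (!![x, y; -R, P] : M2Z).det = g * 1 := by
      rw [Matrix.det_fin_two_of, mul_one]
      calc g * (x * P - y * -R) = x * (g * P) + y * (g * R) := by ring
        _ = x * p + y * r := by rw [← hP, ← hR]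
        _ = g := by linear_combination hbez
    exact mul_left_cancel₀ hgpos.ne' hgg
  have ht1ne : -R*q + P*t ≠ 0 := by
    intro h0
    apply hdet
    have h5 : ((!![x, y; -R, P] : M2Z) * !![p, q; r, t]).det = p * t - q * r := by
      rw [Matrix.det_mul, hdetU1, one_mul, Matrix.det_fin_two_of]
    rw [key1, Matrix.det_fin_two_of, h0] at h5
    simpa using h5.symm
  obtain ⟨e, he, het⟩ : ∃ e : ℤ, (e = 1 ∨ e = -1) ∧ 0 < e * (-R*q + P*t) := by
    rcases ht1ne.lt_or_gt with h0 | h0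
    · exact ⟨-1, Or.inr rfl, by linarith⟩
    · exact ⟨1, Or.inl rfl, by linarith⟩
  have key2 : (!![1, 0; 0, e] : M2Z) * !![g, x*q+y*t; 0, -R*q+P*t]
      = !![g, x*q+y*t; 0, e * (-R*q+P*t)] := by
    rw [Matrix.mul_fin_two]
    exact fin2_ext (by ring) (by ring) (by ring) (by ring)
  have hdetU2 : IsUnit (!![1, 0; 0, e] : M2Z) := by
    rw [Matrix.isUnit_iff_isUnit_det, Matrix.det_fin_two_of, Int.isUnit_iff]
    rcases he with h0 | h0 <;> rw [h0] <;> norm_num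
  set t2 : ℤ := e * (-R*q + P*t) with ht2def
  set k : ℤ := (x*q+y*t) / t2 with hkdef
  have key3 : (!![1, -k; 0, 1] : M2Z) * !![g, x*q+y*t; 0, t2]
      = !![g, (x*q+y*t) % t2; 0, t2] := by
    rw [Matrix.mul_fin_two]
    refine fin2_ext (by ring) ?_ (by ring) (by ring)
    rw [Int.emod_def, hkdef]; ring
  have hdetU3 : IsUnit (!![1, -k; 0, 1] : M2Z) := by
    rw [Matrix.isUnit_iff_isUnit_det, Matrix.det_fin_two_of, Int.isUnit_iff]
    norm_num
  have hdetU1' : IsUnit (!![x, y; -R, P] : M2Z) := by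
    rw [Matrix.isUnit_iff_isUnit_det, hdetU1]; exact isUnit_one
  refine ⟨!![1, -k; 0, 1] * (!![1, 0; 0, e] * !![x, y; -R, P]), g, (x*q+y*t) % t2, t2,
    hdetU3.mul (hdetU2.mul hdetU1'), ?_, hgpos, het,
    Int.emod_nonneg _ het.ne', Int.emod_lt_of_pos _ het⟩
  rw [mul_assoc, mul_assoc, key1, key2, key3]

lemma phi_eq_of (h : H) (m : Mns) (u : M2Zˣ) (hu : mkM h = (u : M2Z) * (m : M2Z)) :
    Φ h = Quotient.mk leftGL m := by
  symm
  exact Quotient.sound ⟨u, hu⟩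

lemma phi_surj : Function.Surjective Φ := by
  intro xq
  obtain ⟨m, rfl⟩ := Quotient.exists_rep xq
  obtain ⟨U, a, b, d, hU, hUM, ha, hd, hb0, hbd⟩ := row_reduce (m : M2Z) m.2
  refine ⟨(⟨a.toNat, by omega⟩, ⟨⟨d.toNat, by omega⟩, ⟨b.toNat, by
    show b.toNat < d.toNat; omega⟩⟩), phi_eq_of _ _ hU.unit ?_⟩
  rw [IsUnit.unit_spec, hUM]
  simp only [mkM]
  exact fin2_ext (by simp [Int.toNat_of_nonneg ha.le]) (by simp [Int.toNat_of_nonneg hb0])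
    rfl (by simp [Int.toNat_of_nonneg hd.le])

lemma primClass_phi (h : H) : PrimClass (Φ h) ↔ prim h := by
  have hrfl : PrimClass (Φ h) = _root_.IsPrimitive (mkM h) := rfl
  rw [hrfl]
  constructor
  · intro hp
    have hdvd : ∀ i j,
        ((Nat.gcd (h.1 : ℕ) (Nat.gcd (h.2.2 : ℕ) (h.2.1 : ℕ)) : ℕ) : ℤ) ∣ mkM h i j := by
      intro i j
      fin_cases i <;> fin_cases j <;> simp only [mkM, Matrix.cons_val', Matrix.cons_val_zero,
        Matrix.cons_val_one, Matrix.head_cons, Matrix.head_fin_const, Matrix.empty_val',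
        Matrix.cons_val_fin_one]
      · exact Int.natCast_dvd_natCast.mpr (Nat.gcd_dvd_left _ _)
      · exact Int.natCast_dvd_natCast.mpr
          ((Nat.gcd_dvd_right _ _).trans (Nat.gcd_dvd_left _ _))
      · exact dvd_zero _
      · exact Int.natCast_dvd_natCast.mpr
          ((Nat.gcd_dvd_right _ _).trans (Nat.gcd_dvd_right _ _))
    have hunit := hp _ hdvd
    rcases Int.isUnit_iff.mp hunit with h1 | h1
    · exact_mod_cast h1
    · exfalso; omega
  · intro hg u hu
    have ha := hu 0 0
    have hb := hu 0 1
    have hd := hu 1 1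
    simp only [mkM, Matrix.cons_val', Matrix.cons_val_zero, Matrix.cons_val_one,
      Matrix.head_cons, Matrix.head_fin_const, Matrix.empty_val',
      Matrix.cons_val_fin_one] at ha hb hd
    rw [Int.isUnit_iff_natAbs_eq]
    have h1 : u.natAbs ∣ (h.1 : ℕ) := by
      have := Int.natAbs_dvd_natAbs.mpr ha; simpa using this
    have h2 : u.natAbs ∣ (h.2.2 : ℕ) := by
      have := Int.natAbs_dvd_natAbs.mpr hb; simpa using this
    have h3 : u.natAbs ∣ (h.2.1 : ℕ) := by
      have := Int.natAbs_dvd_natAbs.mpr hd; simpa using this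
    have h4 : u.natAbs ∣ 1 := hg ▸ Nat.dvd_gcd h1 (Nat.dvd_gcd h2 h3)
    exact Nat.dvd_one.mp h4

lemma detAbs_phi (h : H) : detAbs (Φ h) = (h.1 : ℕ) * (h.2.1 : ℕ) := by
  have hrfl : detAbs (Φ h) = ((mkM h).det).natAbs := rfl
  rw [hrfl, mkM_det, ← Nat.cast_mul, Int.natAbs_natCast]

/-! ### The scaling bijection -/

def scale (g : ℕ+) (h : H) : H :=
  (g * h.1, ⟨g * h.2.1, ⟨(g : ℕ) * (h.2.2 : ℕ), by
    rw [PNat.mul_coe]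
    exact mul_lt_mul_of_pos_left h.2.2.isLt (by exact_mod_cast g.pos)⟩⟩)

lemma prim_scale_gcd (g : ℕ+) (h : H) (hp : prim h) :
    Nat.gcd ((g:ℕ) * (h.1:ℕ)) (Nat.gcd ((g:ℕ) * (h.2.2:ℕ)) ((g:ℕ) * (h.2.1:ℕ))) = (g:ℕ) := by
  rw [Nat.gcd_mul_left, Nat.gcd_mul_left, hp, mul_one]

lemma scale_bij :
    Function.Bijective (fun z : ℕ+ × {h : H // prim h} => scale z.1 z.2.1) := by
  constructor
  · rintro ⟨g, h, hp⟩ ⟨g', h', hp'⟩ e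
    simp only at e
    have n1 : (g:ℕ) * (h.1:ℕ) = (g':ℕ) * (h'.1:ℕ) := by
      have := congrArg (fun z : H => (z.1 : ℕ)) e
      simpa [scale] using this
    have n2 : (g:ℕ) * (h.2.1:ℕ) = (g':ℕ) * (h'.2.1:ℕ) := by
      have := congrArg (fun z : H => (z.2.1 : ℕ)) e
      simpa [scale] using this
    have n3 : (g:ℕ) * (h.2.2:ℕ) = (g':ℕ) * (h'.2.2:ℕ) := by
      have := congrArg (fun z : H => (z.2.2 : ℕ)) e
      simpa [scale] using this
    have hgg : (g:ℕ) = (g':ℕ) := by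
      have k1 := prim_scale_gcd g h hp
      have k2 := prim_scale_gcd g' h' hp'
      rw [n1, n2, n3, k2] at k1
      exact k1.symm
    obtain rfl : g = g' := PNat.coe_injective hgg
    refine Prod.ext rfl (Subtype.ext (H_ext ?_ ?_ ?_))
    · exact Nat.eq_of_mul_eq_mul_left g.pos n1
    · exact Nat.eq_of_mul_eq_mul_left g.pos n2
    · exact Nat.eq_of_mul_eq_mul_left g.pos n3
  · rintro ⟨a, d, b⟩
    have hGa : Nat.gcd (a:ℕ) (Nat.gcd (b:ℕ) (d:ℕ)) ∣ (a:ℕ) := Nat.gcd_dvd_left _ _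
    have hGb : Nat.gcd (a:ℕ) (Nat.gcd (b:ℕ) (d:ℕ)) ∣ (b:ℕ) :=
      (Nat.gcd_dvd_right _ _).trans (Nat.gcd_dvd_left _ _)
    have hGd : Nat.gcd (a:ℕ) (Nat.gcd (b:ℕ) (d:ℕ)) ∣ (d:ℕ) :=
      (Nat.gcd_dvd_right _ _).trans (Nat.gcd_dvd_right _ _)
    set G := Nat.gcd (a:ℕ) (Nat.gcd (b:ℕ) (d:ℕ)) with hG
    have hGpos : 0 < G := Nat.gcd_pos_of_pos_left _ a.pos
    have hprim : Nat.gcd ((a:ℕ) / G) (Nat.gcd ((b:ℕ) / G) ((d:ℕ) / G)) = 1 := by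
      have key : Nat.gcd ((a:ℕ) / G) (Nat.gcd ((b:ℕ) / G) ((d:ℕ) / G)) * G = 1 * G := by
        rw [one_mul, ← Nat.gcd_mul_right, ← Nat.gcd_mul_right, Nat.div_mul_cancel hGa,
          Nat.div_mul_cancel hGb, Nat.div_mul_cancel hGd]
      exact Nat.eq_of_mul_eq_mul_right hGpos key
    refine ⟨⟨⟨G, hGpos⟩, ⟨(⟨(a:ℕ) / G, Nat.div_pos (Nat.le_of_dvd a.pos hGa) hGpos⟩,
      ⟨⟨(d:ℕ) / G, Nat.div_pos (Nat.le_of_dvd d.pos hGd) hGpos⟩,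
       ⟨(b:ℕ) / G, Nat.div_lt_div_of_lt_of_dvd hGd b.isLt⟩⟩), hprim⟩⟩, ?_⟩
    apply H_ext
    · exact (PNat.mul_coe _ _).trans (Nat.mul_div_cancel' hGa)
    · exact (PNat.mul_coe _ _).trans (Nat.mul_div_cancel' hGd)
    · simpa [scale] using Nat.mul_div_cancel' hGb

/-! ### Analytic part -/

lemma summable_pnat_rpow {σ : ℝ} (hσ : 1 < σ) :
    Summable (fun a : ℕ+ => ((a : ℕ) : ℝ) ^ (-σ)) := by
  have h1 : Summable (fun n : ℕ => (n : ℝ) ^ (-σ)) :=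
    Real.summable_nat_rpow.mpr (by linarith)
  exact h1.comp_injective (fun a b hab => PNat.coe_injective hab)

lemma hd_fiber_sum {σ : ℝ} (d : ℕ+) :
    ∑' _ : Fin (d : ℕ), ((d : ℕ) : ℝ) ^ (-σ) = ((d : ℕ) : ℝ) ^ (1 - σ) := by
  have hdpos : (0:ℝ) < ((d:ℕ):ℝ) := by exact_mod_cast d.pos
  rw [tsum_fintype, Finset.sum_const, Finset.card_univ, Fintype.card_fin, nsmul_eq_mul,
    show (1 - σ) = 1 + -σ by ring, Real.rpow_add hdpos, Real.rpow_one]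

lemma summable_Hd_rpow {σ : ℝ} (hσ : 2 < σ) :
    Summable (fun z : Hd => ((z.1 : ℕ) : ℝ) ^ (-σ)) := by
  refine (summable_sigma_of_nonneg ?_).mpr ⟨fun d => Summable.of_finite, ?_⟩
  · intro z; positivity
  · have h1 : Summable (fun d : ℕ+ => ((d : ℕ) : ℝ) ^ (-(σ - 1))) :=
      summable_pnat_rpow (by linarith)
    exact h1.congr fun d => by
      rw [show -(σ - 1) = 1 - σ by ring, ← hd_fiber_sum]

lemma norm_cpow_pnat (w : ℂ) (n : ℕ) (hn : 0 < n) :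
    ‖((n : ℕ) : ℂ) ^ (-w)‖ = (n : ℝ) ^ (-w.re) := by
  rw [Complex.norm_natCast_cpow_of_pos hn]
  simp

lemma summable_norm_pnat_cpow {w : ℂ} (hw : 1 < w.re) :
    Summable (fun a : ℕ+ => ‖((a : ℕ) : ℂ) ^ (-w)‖) :=
  (summable_pnat_rpow hw).congr fun a => (norm_cpow_pnat w a a.pos).symm

lemma summable_norm_Hd_cpow {w : ℂ} (hw : 2 < w.re) :
    Summable (fun z : Hd => ‖((z.1 : ℕ) : ℂ) ^ (-w)‖) :=
  (summable_Hd_rpow hw).congr fun z => (norm_cpow_pnat w z.1 z.1.pos).symm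

lemma tsum_pnat_cpow {w : ℂ} (hw : 1 < w.re) :
    ∑' a : ℕ+, ((a : ℕ) : ℂ) ^ (-w) = riemannZeta w := by
  rw [zeta_eq_tsum_one_div_nat_add_one_cpow hw,
    ← Equiv.tsum_eq Equiv.pnatEquivNat.symm (fun a : ℕ+ => ((a : ℕ) : ℂ) ^ (-w))]
  refine tsum_congr fun n => ?_
  have h1 : ((Equiv.pnatEquivNat.symm n : ℕ+) : ℕ) = n + 1 := by
    simp [Equiv.pnatEquivNat, Nat.succPNat]
  rw [h1]
  push_cast
  rw [Complex.cpow_neg, one_div]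

lemma tsum_Hd_cpow {w : ℂ} (hw : 2 < w.re) :
    ∑' z : Hd, ((z.1 : ℕ) : ℂ) ^ (-w) = riemannZeta (w - 1) := by
  have hsum : Summable (fun z : Hd => ((z.1 : ℕ) : ℂ) ^ (-w)) :=
    (summable_norm_Hd_cpow hw).of_norm
  rw [hsum.tsum_sigma]
  have step : ∀ d : ℕ+, ∑' _ : Fin (d:ℕ), ((d:ℕ):ℂ) ^ (-w) = ((d:ℕ):ℂ) ^ (-(w-1)) := by
    intro d
    have hdne : ((d:ℕ):ℂ) ≠ 0 := Nat.cast_ne_zero.mpr d.pos.ne'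
    rw [tsum_fintype, Finset.sum_const, Finset.card_univ, Fintype.card_fin, nsmul_eq_mul,
      show -(w-1) = 1 + -w by ring, Complex.cpow_add _ _ hdne, Complex.cpow_one]
  rw [tsum_congr step]
  exact tsum_pnat_cpow (by rw [Complex.sub_re, Complex.one_re]; linarith)

def F (s : ℂ) (h : H) : ℂ := (((h.1 : ℕ) * (h.2.1 : ℕ) : ℕ) : ℂ) ^ (-s)

lemma F_eq (s : ℂ) (h : H) :
    F s h = ((h.1:ℕ):ℂ) ^ (-s) * ((h.2.1:ℕ):ℂ) ^ (-s) := by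
  simp only [F, Nat.cast_mul, Complex.natCast_mul_natCast_cpow]

lemma summable_norm_F {s : ℂ} (hs : 2 < s.re) : Summable (fun h : H => ‖F s h‖) := by
  have h1 := summable_norm_pnat_cpow (w := s) (by linarith)
  have h2 := summable_norm_Hd_cpow (w := s) hs
  exact (h1.mul_of_nonneg h2 (fun _ => norm_nonneg _) (fun _ => norm_nonneg _)).congr
    fun h => by rw [← norm_mul, ← F_eq]

lemma tsum_F {s : ℂ} (hs : 2 < s.re) :
    ∑' h : H, F s h = riemannZeta s * riemannZeta (s - 1) := by
  have h1 := summable_norm_pnat_cpow (w := s) (by linarith)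
  have h2 := summable_norm_Hd_cpow (w := s) hs
  calc ∑' h : H, F s h
      = ∑' z : ℕ+ × Hd, ((z.1:ℕ):ℂ) ^ (-s) * ((z.2.1:ℕ):ℂ) ^ (-s) :=
        tsum_congr fun h => F_eq s h
    _ = (∑' a : ℕ+, ((a:ℕ):ℂ) ^ (-s)) * (∑' z : Hd, ((z.1:ℕ):ℂ) ^ (-s)) :=
        (tsum_mul_tsum_of_summable_norm h1 h2).symm
    _ = riemannZeta s * riemannZeta (s - 1) := by
        rw [tsum_pnat_cpow (by linarith), tsum_Hd_cpow hs]

lemma two_s_re (s : ℂ) : (2 * s).re = 2 * s.re := by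
  simp [Complex.mul_re]

lemma F_scale (s : ℂ) (g : ℕ+) (h : H) :
    F s (scale g h) = ((g:ℕ):ℂ) ^ (-(2 * s)) * F s h := by
  have hg : ((g:ℕ):ℂ) ≠ 0 := Nat.cast_ne_zero.mpr g.pos.ne'
  simp only [F, scale, PNat.mul_coe]
  rw [show ((g:ℕ) * (h.1:ℕ)) * ((g:ℕ) * (h.2.1:ℕ))
      = ((g:ℕ) * (g:ℕ)) * ((h.1:ℕ) * (h.2.1:ℕ)) by ring]
  rw [Nat.cast_mul, Complex.natCast_mul_natCast_cpow]
  congr 1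
  rw [Nat.cast_mul, Complex.natCast_mul_natCast_cpow, ← Complex.cpow_add _ _ hg]
  congr 1
  ring

lemma tsum_prim {s : ℂ} (hs : 2 < s.re) :
    riemannZeta (2 * s) * (∑' p : {h : H // prim h}, F s p.1)
      = riemannZeta s * riemannZeta (s - 1) := by
  have h2s : 1 < (2 * s).re := by rw [two_s_re]; linarith
  have hznorm : Summable (fun g : ℕ+ => ‖((g:ℕ):ℂ) ^ (-(2 * s))‖) :=
    summable_norm_pnat_cpow h2s
  have hsubnorm : Summable (fun p : {h : H // prim h} => ‖F s p.1‖) :=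
    (summable_norm_F hs).comp_injective Subtype.val_injective
  have key : ∑' z : ℕ+ × {h : H // prim h}, ((z.1:ℕ):ℂ) ^ (-(2 * s)) * F s z.2.1
      = ∑' h : H, F s h := by
    rw [← Equiv.tsum_eq (Equiv.ofBijective _ scale_bij) (F s)]
    exact tsum_congr fun z => (F_scale s z.1 z.2.1).symm
  calc riemannZeta (2 * s) * (∑' p : {h : H // prim h}, F s p.1)
      = (∑' g : ℕ+, ((g:ℕ):ℂ) ^ (-(2 * s))) * (∑' p : {h : H // prim h}, F s p.1) := by
        rw [tsum_pnat_cpow h2s]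
    _ = ∑' z : ℕ+ × {h : H // prim h}, ((z.1:ℕ):ℂ) ^ (-(2 * s)) * F s z.2.1 :=
        tsum_mul_tsum_of_summable_norm hznorm hsubnorm
    _ = ∑' h : H, F s h := key
    _ = riemannZeta s * riemannZeta (s - 1) := tsum_F hs

def primEquiv : {h : H // prim h} ≃ {x : X // PrimClass x} :=
  Equiv.subtypeEquiv (Equiv.ofBijective _ ⟨phi_inj, phi_surj⟩)
    (fun h => (primClass_phi h).symm)

lemma primEquiv_val (p : {h : H // prim h}) : (primEquiv p).1 = Φ p.1 := rfl

end BigPictureAux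


open Complex in
/-- for `Re(s) > 2`, the zeta function of Conway's big picture
(the set `𝔓 ⊆ X` of primitive classes) is
`ζ_𝔓(s) = Σ_{x ∈ 𝔓} |det x|^{−s} = ζ(s)ζ(s−1)/ζ(2s)`. -/
theorem bigPicture_zeta (s : ℂ) (hs : 2 < s.re) :
    ∑' x : {x : X // PrimClass x}, ((detAbs x.1 : ℂ) ^ (-s)) =
      riemannZeta s * riemannZeta (s - 1) / riemannZeta (2 * s) := by
  classical
  open BigPictureAux in
  have hζ2s : riemannZeta (2 * s) ≠ 0 :=
    riemannZeta_ne_zero_of_one_lt_re (by rw [BigPictureAux.two_s_re]; linarith)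
  have h1 : (∑' x : {x : X // PrimClass x}, ((detAbs x.1 : ℂ) ^ (-s)))
      = ∑' p : {h : BigPictureAux.H // BigPictureAux.prim h}, BigPictureAux.F s p.1 := by
    rw [← Equiv.tsum_eq BigPictureAux.primEquiv
      (fun x : {x : X // PrimClass x} => ((detAbs x.1 : ℂ) ^ (-s)))]
    refine tsum_congr fun p => ?_
    rw [BigPictureAux.primEquiv_val, BigPictureAux.detAbs_phi]
    rfl
  rw [h1, eq_div_iff hζ2s, mul_comm]
  exact BigPictureAux.tsum_prim hs
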